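/- arXiv:2203.13065 — 3 statements merged into one kernel-verified Lean document; each statement's English description precedes it below -/
import Mathlib

section
/- Let A be a 2×2 real matrix with a repeated nonzero eigenvalue λ and with λ equal to the (1,1) entry a (equivalently bc = 0, where b, c are the off-diagonal entries). Then the best (minimal) Hyers-Ulam constant for the system x' = Ax on ℝ equals ‖A⁻¹‖_∞ = (|λ| + max{|b|,|c|})/λ². -/
open Matrix

/-- Induced matrix max-norm (maximum row sum of absolute values). -/
noncomputable def matNormInf (M : Matrix (Fin 2) (Fin 2) ℝ) : ℝ :=
  max (|M 0 0| + |M 0 1|) (|M 1 0| + |M 1 1|)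

/-- Hyers-Ulam stability of `x' = Ax` on `ℝ` with constant `K` (max norm on `ℝ²`). -/
def IsHUSWith (A : Matrix (Fin 2) (Fin 2) ℝ) (K : ℝ) : Prop :=
  ∀ ε > (0:ℝ), ∀ φ : ℝ → (Fin 2 → ℝ), Differentiable ℝ φ →
    (∀ t : ℝ, ‖deriv φ t - A.mulVec (φ t)‖ ≤ ε) →
    ∃ x₀ : Fin 2 → ℝ, ∀ t : ℝ,
      ‖φ t - (NormedSpace.exp (t • A)).mulVec x₀‖ ≤ K * ε

open MeasureTheory Set


-- split lemma for Ioi integrals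
lemma integral_Ioi_split {g : ℝ → ℝ} {s t : ℝ} (hst : s ≤ t)
    (hg : IntegrableOn g (Ioi s)) :
    ∫ τ in Ioi s, g τ = (∫ τ in s..t, g τ) + ∫ τ in Ioi t, g τ := by
  have hunion : Ioc s t ∪ Ioi t = Ioi s := Ioc_union_Ioi_eq_Ioi hst
  have hdisj : Disjoint (Ioc s t) (Ioi t) := by
    apply disjoint_left.mpr
    intro x hx hx'
    exact absurd hx.2 (not_le.mpr hx')
  have h1 : IntegrableOn g (Ioc s t) := hg.mono_set (fun x hx => hx.1)
  have h2 : IntegrableOn g (Ioi t) := hg.mono_set (Ioi_subset_Ioi hst)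
  rw [intervalIntegral.integral_of_le hst, ← MeasureTheory.setIntegral_union hdisj
    measurableSet_Ioi h1 h2, hunion]

lemma scalar_pos {lam δ : ℝ} (hl : 0 < lam) (u : ℝ → ℝ) (hu : Differentiable ℝ u)
    (hb : ∀ t, |deriv u t - lam * u t| ≤ δ) :
    ∃ a : ℝ, ∀ t, |u t - a * Real.exp (lam * t)| ≤ δ / lam := by
  set w : ℝ → ℝ := fun t => Real.exp (-(lam * t)) * u t with hw
  have hwderiv : ∀ t, HasDerivAt w (Real.exp (-(lam * t)) * (deriv u t - lam * u t)) t := by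
    intro t
    have h1 : HasDerivAt (fun t : ℝ => Real.exp (-(lam * t))) (-lam * Real.exp (-(lam * t))) t := by
      have : HasDerivAt (fun t : ℝ => -(lam * t)) (-lam) t := by
        simpa using ((hasDerivAt_id t).const_mul lam).fun_neg
      simpa [mul_comm] using this.exp
    have := h1.mul (hu t).hasDerivAt
    exact this.congr_deriv (by ring)
  have hwdiff : Differentiable ℝ w := fun t => (hwderiv t).differentiableAt
  have hderiv_eq : ∀ t, deriv w t = Real.exp (-(lam * t)) * (deriv u t - lam * u t) :=
    fun t => (hwderiv t).deriv
  have hgbound : ∀ t, |deriv w t| ≤ δ * Real.exp (-(lam * t)) := by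
    intro t
    rw [hderiv_eq, abs_mul, abs_of_pos (Real.exp_pos _)]
    rw [mul_comm]
    exact mul_le_mul_of_nonneg_right (hb t) (Real.exp_pos _).le
  have hδ0 : 0 ≤ δ := le_trans (abs_nonneg _) (hb 0)
  have hmeas : Measurable (deriv w) := measurable_deriv w
  have hbint : ∀ T : ℝ, IntegrableOn (fun τ => δ * Real.exp (-(lam * τ))) (Ioi T) := by
    intro T
    have := (exp_neg_integrableOn_Ioi T hl).const_mul δ
    simpa [neg_mul, IntegrableOn] using this
  have hint : ∀ T : ℝ, IntegrableOn (deriv w) (Ioi T) := by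
    intro T
    refine Integrable.mono' (hbint T) (hmeas.aestronglyMeasurable) ?_
    exact Filter.Eventually.of_forall fun τ => (by simpa using hgbound τ)
  have hFTC : ∀ t : ℝ, ∫ τ in (0:ℝ)..t, deriv w τ = w t - w 0 := by
    intro t
    refine intervalIntegral.integral_deriv_eq_sub (fun x _ => hwdiff x) ?_
    refine IntegrableOn.intervalIntegrable ?_
    refine (hint (min 0 t - 1)).mono_set ?_
    intro x hx
    have h2 : min 0 t ≤ x := hx.1
    simp only [Set.mem_Ioi]
    simp only [min_def] at h2 ⊢
    split at h2 <;> split <;> linarith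
  set a : ℝ := w 0 + ∫ τ in Ioi (0:ℝ), deriv w τ with ha
  have key : ∀ t : ℝ, w t - a = -∫ τ in Ioi t, deriv w τ := by
    intro t
    rcases le_total 0 t with h | h
    · have hsp := integral_Ioi_split h (hint 0)
      have := hFTC t
      rw [ha]
      linarith [hsp, this]
    · have hsp := integral_Ioi_split h (hint t)
      have := hFTC t
      have hsymm : ∫ τ in t..(0:ℝ), deriv w τ = -∫ τ in (0:ℝ)..t, deriv w τ :=
        intervalIntegral.integral_symm 0 t
      rw [ha]
      linarith [hsp, this, hsymm]
  have hexpint : ∀ t : ℝ, ∫ τ in Ioi t, Real.exp (-(lam * τ)) = Real.exp (-(lam * t)) / lam := by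
    intro t
    have hder : ∀ x ∈ Ici t, HasDerivAt (fun x : ℝ => -(Real.exp (-(lam * x))) / lam)
        (Real.exp (-(lam * x))) x := by
      intro x _
      have h1 : HasDerivAt (fun x : ℝ => -(lam * x)) (-lam) x := by
        simpa using ((hasDerivAt_id x).const_mul lam).fun_neg
      have h2 := h1.exp
      have h3 := (h2.neg).div_const lam
      exact h3.congr_deriv (by field_simp)
    have htend : Filter.Tendsto (fun x : ℝ => -(Real.exp (-(lam * x))) / lam)
        Filter.atTop (nhds 0) := by
      have h1 : Filter.Tendsto (fun x : ℝ => -(lam * x)) Filter.atTop Filter.atBot := by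
        have h0 : Filter.Tendsto (fun x : ℝ => lam * x) Filter.atTop Filter.atTop :=
          Filter.Tendsto.const_mul_atTop hl Filter.tendsto_id
        have h2 := Filter.tendsto_neg_atBot_iff.mpr h0
        simpa using h2
      have h2 := (Real.tendsto_exp_atBot.comp h1).neg.div_const lam
      simpa using h2
    have hbint' : IntegrableOn (fun τ => Real.exp (-(lam * τ))) (Ioi t) := by
      have := exp_neg_integrableOn_Ioi t hl
      simpa [neg_mul] using this
    have := MeasureTheory.integral_Ioi_of_hasDerivAt_of_tendsto' hder hbint' htend
    rw [this]
    field_simp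
    ring
  refine ⟨a, fun t => ?_⟩
  have h1 : |∫ τ in Ioi t, deriv w τ| ≤ δ * Real.exp (-(lam * t)) / lam := by
    have hle : ‖∫ τ in Ioi t, deriv w τ‖ ≤ ∫ τ in Ioi t, δ * Real.exp (-(lam * τ)) :=
      MeasureTheory.norm_integral_le_of_norm_le (hbint t)
        (Filter.Eventually.of_forall fun τ => by simpa using hgbound τ)
    rw [Real.norm_eq_abs] at hle
    calc |∫ τ in Ioi t, deriv w τ| ≤ ∫ τ in Ioi t, δ * Real.exp (-(lam * τ)) := hle
      _ = δ * (Real.exp (-(lam * t)) / lam) := by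
          rw [MeasureTheory.integral_const_mul, hexpint]
      _ = δ * Real.exp (-(lam * t)) / lam := by ring
  have h2 : u t - a * Real.exp (lam * t) = Real.exp (lam * t) * (w t - a) := by
    have : Real.exp (lam * t) * Real.exp (-(lam * t)) = 1 := by
      rw [← Real.exp_add]; simp
    show u t - a * Real.exp (lam * t)
        = Real.exp (lam * t) * (Real.exp (-(lam * t)) * u t - a)
    rw [Real.exp_neg]
    have hpos := Real.exp_pos (lam * t)
    field_simp
  rw [h2, abs_mul, abs_of_pos (Real.exp_pos _), key t, abs_neg]
  calc Real.exp (lam * t) * |∫ τ in Ioi t, deriv w τ| 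
      ≤ Real.exp (lam * t) * (δ * Real.exp (-(lam * t)) / lam) := by
        exact mul_le_mul_of_nonneg_left h1 (Real.exp_pos _).le
    _ = δ / lam * (Real.exp (lam * t) * Real.exp (-(lam * t))) := by ring
    _ = δ / lam := by rw [← Real.exp_add]; simp

lemma scalar_gen {lam δ : ℝ} (hl : lam ≠ 0) (u : ℝ → ℝ) (hu : Differentiable ℝ u)
    (hb : ∀ t, |deriv u t - lam * u t| ≤ δ) :
    ∃ a : ℝ, ∀ t, |u t - a * Real.exp (lam * t)| ≤ δ / |lam| := by
  rcases hl.lt_or_gt with hneg | hpos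
  · -- lam < 0 : apply scalar_pos to u ∘ neg with eigenvalue -lam
    set v : ℝ → ℝ := fun t => u (-t) with hv
    have hvdiff : Differentiable ℝ v := hu.comp (differentiable_neg)
    have hvb : ∀ t, |deriv v t - (-lam) * v t| ≤ δ := by
      intro t
      have hd : deriv v t = -deriv u (-t) := by
        simp only [hv]
        exact deriv_comp_neg u t
      rw [hd]
      have : -deriv u (-t) - -lam * u (-t) = -(deriv u (-t) - lam * u (-t)) := by ring
      rw [this, abs_neg]
      exact hb (-t)
    obtain ⟨a, ha⟩ := scalar_pos (by linarith : 0 < -lam) v hvdiff hvb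
    refine ⟨a, fun t => ?_⟩
    have h := ha (-t)
    rw [abs_of_neg hneg]
    have e1 : v (-t) = u t := by simp [hv]
    have e2 : -lam * -t = lam * t := by ring
    rw [e1, e2] at h
    exact h
  · obtain ⟨a, ha⟩ := scalar_pos hpos u hu hb
    exact ⟨a, fun t => by rw [abs_of_pos hpos]; exact ha t⟩

lemma core {lam β ε : ℝ} (hlam : lam ≠ 0) (p q : ℝ → ℝ)
    (hp : Differentiable ℝ p) (hq : Differentiable ℝ q)
    (h1 : ∀ t, |deriv p t - (lam * p t + β * q t)| ≤ ε)
    (h2 : ∀ t, |deriv q t - lam * q t| ≤ ε) :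
    ∃ a y : ℝ, (∀ t, |p t - Real.exp (lam * t) * (a + t * β * y)| ≤ (|lam| + |β|) / lam ^ 2 * ε) ∧
      (∀ t, |q t - Real.exp (lam * t) * y| ≤ (|lam| + |β|) / lam ^ 2 * ε) := by
  have hε : 0 ≤ ε := le_trans (abs_nonneg _) (h2 0)
  have hlabs : 0 < |lam| := abs_pos.mpr hlam
  obtain ⟨y, hy⟩ := scalar_gen hlam q hq h2
  set v : ℝ → ℝ := fun t => p t - t * β * y * Real.exp (lam * t) with hv
  have hvder : ∀ t, HasDerivAt v (deriv p t - (β * y * Real.exp (lam * t)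
      + t * β * y * (lam * Real.exp (lam * t)))) t := by
    intro t
    have hexp : HasDerivAt (fun t : ℝ => Real.exp (lam * t)) (lam * Real.exp (lam * t)) t := by
      have : HasDerivAt (fun t : ℝ => lam * t) lam t := by
        simpa using (hasDerivAt_id t).const_mul lam
      simpa [mul_comm] using this.exp
    have h1' : HasDerivAt (fun t : ℝ => t * β * y) (β * y) t := by
      have := (hasDerivAt_id t).mul_const (β * y)
      simpa [mul_assoc, one_mul] using this
    have := (hp t).hasDerivAt.sub (h1'.mul hexp)
    exact this
  have hvdiff : Differentiable ℝ v := fun t => (hvder t).differentiableAt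
  have hvb : ∀ t, |deriv v t - lam * v t| ≤ ε + |β| * (ε / |lam|) := by
    intro t
    rw [(hvder t).deriv]
    have heq : deriv p t - (β * y * Real.exp (lam * t) + t * β * y * (lam * Real.exp (lam * t)))
        - lam * v t
        = (deriv p t - (lam * p t + β * q t)) + β * (q t - y * Real.exp (lam * t)) := by
      simp only [hv]; ring
    rw [heq]
    calc |(deriv p t - (lam * p t + β * q t)) + β * (q t - y * Real.exp (lam * t))|
        ≤ |deriv p t - (lam * p t + β * q t)| + |β * (q t - y * Real.exp (lam * t))| :=
          abs_add_le _ _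
      _ ≤ ε + |β| * (ε / |lam|) := by
          rw [abs_mul]
          exact add_le_add (h1 t) (mul_le_mul_of_nonneg_left (by
            have := hy t; simpa [mul_comm] using this) (abs_nonneg β))
  obtain ⟨a, ha⟩ := scalar_gen hlam v hvdiff hvb
  have hsq : lam ^ 2 = |lam| * |lam| := by
    rw [abs_mul_abs_self]; ring
  have hKeq : (ε + |β| * (ε / |lam|)) / |lam| = (|lam| + |β|) / lam ^ 2 * ε := by
    obtain ⟨L, hL0, hLsq, hLabs⟩ : ∃ L : ℝ, 0 < L ∧ lam ^ 2 = L * L ∧ |lam| = L :=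
      ⟨|lam|, hlabs, hsq, rfl⟩
    rw [hLsq, hLabs]
    field_simp
  refine ⟨a, y, fun t => ?_, fun t => ?_⟩
  · have := ha t
    rw [hKeq] at this
    calc |p t - Real.exp (lam * t) * (a + t * β * y)|
        = |v t - a * Real.exp (lam * t)| := by
          simp only [hv]; ring_nf
      _ ≤ (|lam| + |β|) / lam ^ 2 * ε := this
  · have h3 : ε / |lam| ≤ (|lam| + |β|) / lam ^ 2 * ε := by
      rw [div_le_iff₀ hlabs]
      have h4 : (|lam| + |β|) / lam ^ 2 * ε * |lam| = (|lam| + |β|) * ε / |lam| := by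
        obtain ⟨L, hL0, hLsq, hLabs⟩ : ∃ L : ℝ, 0 < L ∧ lam ^ 2 = L * L ∧ |lam| = L :=
          ⟨|lam|, hlabs, hsq, rfl⟩
        rw [hLsq, hLabs]
        field_simp
      rw [h4, le_div_iff₀ hlabs]
      nlinarith [abs_nonneg β, hε]
    calc |q t - Real.exp (lam * t) * y| = |q t - y * Real.exp (lam * t)| := by ring_nf
      _ ≤ ε / |lam| := hy t
      _ ≤ _ := h3

lemma exp_sq_zero {X : Matrix (Fin 2) (Fin 2) ℝ} (h : X ^ 2 = 0) :
    NormedSpace.exp X = 1 + X := by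
  rw [NormedSpace.exp_eq_tsum (𝕂 := ℝ)]
  show (∑' n : ℕ, ((n.factorial :ℝ))⁻¹ • X ^ n) = 1 + X
  rw [tsum_eq_sum (s := {0, 1}) ?_]
  · simp [Finset.sum_pair (by norm_num : (0:ℕ) ≠ 1)]
  · intro n hn
    have hn2 : 2 ≤ n := by
      simp at hn; omega
    have : X ^ n = 0 := by
      calc X ^ n = X ^ 2 * X ^ (n - 2) := by rw [← pow_add]; congr 1; omega
      _ = 0 := by rw [h, zero_mul]
    simp [this]

lemma expUpper (lam b t : ℝ) :
    NormedSpace.exp (t • (!![lam, b; 0, lam] : Matrix (Fin 2) (Fin 2) ℝ)) =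
      !![Real.exp (lam*t), t*b*Real.exp (lam*t); 0, Real.exp (lam*t)] := by
  have hsplit : t • (!![lam, b; 0, lam] : Matrix (Fin 2) (Fin 2) ℝ) =
      (t*lam) • (1 : Matrix (Fin 2) (Fin 2) ℝ) + (t*b) • (!![0,1;0,0] : Matrix (Fin 2) (Fin 2) ℝ) := by
    ext i j; fin_cases i <;> fin_cases j <;> simp [Matrix.one_apply] <;> ring
  have hcomm : Commute ((t*lam) • (1 : Matrix (Fin 2) (Fin 2) ℝ))
      ((t*b) • (!![0,1;0,0] : Matrix (Fin 2) (Fin 2) ℝ)) :=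
    ((Commute.one_left _).smul_left _).smul_right _
  have hN : ((t*b) • (!![0,1;0,0] : Matrix (Fin 2) (Fin 2) ℝ)) ^ 2 = 0 := by
    ext i j; fin_cases i <;> fin_cases j <;>
      simp [pow_two, Matrix.mul_apply, Fin.sum_univ_two]
  have h1 : NormedSpace.exp ((t*lam) • (1 : Matrix (Fin 2) (Fin 2) ℝ)) =
      Real.exp (t*lam) • (1 : Matrix (Fin 2) (Fin 2) ℝ) := by
    rw [Matrix.smul_one_eq_diagonal, Matrix.exp_diagonal, Matrix.smul_one_eq_diagonal]
    congr 1
    funext i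
    rw [Pi.exp_def, ← Real.exp_eq_exp_ℝ]
  rw [hsplit, Matrix.exp_add_of_commute _ _ hcomm, h1, exp_sq_zero hN]
  ext i j
  fin_cases i <;> fin_cases j <;>
    simp [Matrix.mul_apply, Fin.sum_univ_two, Matrix.one_apply] <;> ring

lemma expLower (lam c t : ℝ) :
    NormedSpace.exp (t • (!![lam, 0; c, lam] : Matrix (Fin 2) (Fin 2) ℝ)) =
      !![Real.exp (lam*t), 0; t*c*Real.exp (lam*t), Real.exp (lam*t)] := by
  have h : t • (!![lam, 0; c, lam] : Matrix (Fin 2) (Fin 2) ℝ)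
      = (t • (!![lam, c; 0, lam] : Matrix (Fin 2) (Fin 2) ℝ))ᵀ := by
    ext i j; fin_cases i <;> fin_cases j <;> simp
  rw [h, Matrix.exp_transpose, expUpper]
  ext i j; fin_cases i <;> fin_cases j <;> simp

lemma comp_le {x : Fin 2 → ℝ} {r : ℝ} (h : ‖x‖ ≤ r) (i : Fin 2) : |x i| ≤ r :=
  le_trans (by rw [← Real.norm_eq_abs]; exact norm_le_pi_norm x i) h

lemma unbdd {lam y K : ℝ} (hlam : lam ≠ 0) (h : ∀ t : ℝ, |Real.exp (lam * t) * y| ≤ K) :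
    y = 0 := by
  by_contra hy
  have hyabs : 0 < |y| := abs_pos.mpr hy
  have hK : 0 ≤ K := le_trans (abs_nonneg _) (h 0)
  have hpos : 0 < (K + 1) / |y| := by positivity
  set t := lam⁻¹ * Real.log ((K + 1) / |y|) with ht
  have hexp : Real.exp (lam * t) = (K + 1) / |y| := by
    rw [show lam * t = Real.log ((K + 1) / |y|) by rw [ht]; field_simp]
    exact Real.exp_log hpos
  have h2 := h t
  rw [abs_mul, abs_of_pos (Real.exp_pos _), hexp, div_mul_cancel₀ _ (ne_of_gt hyabs)] at h2
  linarith

/-- component derivative -/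
lemma comp_hasDerivAt {φ : ℝ → (Fin 2 → ℝ)} (hφ : Differentiable ℝ φ) (i : Fin 2) (t : ℝ) :
    HasDerivAt (fun s => φ s i) (deriv φ t i) t := by
  have h1 : HasDerivAt φ (deriv φ t) t := (hφ t).hasDerivAt
  have h2 := (ContinuousLinearMap.proj (R := ℝ) (φ := fun _ : Fin 2 => ℝ) i).hasFDerivAt.comp_hasDerivAt t h1
  exact h2

lemma husUpper (lam b : ℝ) (hlam : lam ≠ 0) :
    IsHUSWith !![lam, b; 0, lam] ((|lam| + |b|) / lam ^ 2) := by
  intro ε hε φ hφ hbound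
  have hp : Differentiable ℝ (fun s => φ s 0) := fun t => (comp_hasDerivAt hφ 0 t).differentiableAt
  have hq : Differentiable ℝ (fun s => φ s 1) := fun t => (comp_hasDerivAt hφ 1 t).differentiableAt
  have hmul : ∀ t, (!![lam, b; 0, lam]).mulVec (φ t) =
      ![lam * φ t 0 + b * φ t 1, lam * φ t 1] := by
    intro t; funext i; fin_cases i <;>
      simp [Matrix.mulVec, dotProduct, Fin.sum_univ_two]
  have h1 : ∀ t, |deriv (fun s => φ s 0) t - (lam * φ t 0 + b * φ t 1)| ≤ ε := by
    intro t
    rw [(comp_hasDerivAt hφ 0 t).deriv]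
    have := comp_le (hbound t) 0
    simpa [hmul t] using this
  have h2 : ∀ t, |deriv (fun s => φ s 1) t - lam * φ t 1| ≤ ε := by
    intro t
    rw [(comp_hasDerivAt hφ 1 t).deriv]
    have := comp_le (hbound t) 1
    simpa [hmul t] using this
  obtain ⟨a, y, ha, hy⟩ := core hlam _ _ hp hq h1 h2
  refine ⟨![a, y], fun t => ?_⟩
  have hK : (0:ℝ) ≤ (|lam| + |b|) / lam ^ 2 * ε := by positivity
  rw [pi_norm_le_iff_of_nonneg hK]
  intro i
  have hexp : (NormedSpace.exp (t • !![lam, b; 0, lam])).mulVec ![a, y] =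
      ![Real.exp (lam*t) * a + t*b*Real.exp (lam*t) * y, Real.exp (lam*t) * y] := by
    rw [expUpper]
    funext j; fin_cases j <;> simp [Matrix.mulVec, dotProduct, Fin.sum_univ_two]
  rw [hexp]
  fin_cases i
  · have := ha t
    simp only [Pi.sub_apply, Real.norm_eq_abs]
    calc |φ t 0 - ![Real.exp (lam*t) * a + t*b*Real.exp (lam*t) * y, Real.exp (lam*t) * y] 0|
        = |φ t 0 - Real.exp (lam * t) * (a + t * b * y)| := by
          congr 1
          simp only [Matrix.cons_val_zero]
          ring
      _ ≤ (|lam| + |b|) / lam ^ 2 * ε := ha t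
  · simp only [Pi.sub_apply, Real.norm_eq_abs]
    calc |φ t 1 - ![Real.exp (lam*t) * a + t*b*Real.exp (lam*t) * y, Real.exp (lam*t) * y] 1|
        = |φ t 1 - Real.exp (lam * t) * y| := by congr 1
      _ ≤ (|lam| + |b|) / lam ^ 2 * ε := hy t

lemma husLower (lam c : ℝ) (hlam : lam ≠ 0) :
    IsHUSWith !![lam, 0; c, lam] ((|lam| + |c|) / lam ^ 2) := by
  intro ε hε φ hφ hbound
  have hp : Differentiable ℝ (fun s => φ s 1) := fun t => (comp_hasDerivAt hφ 1 t).differentiableAt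
  have hq : Differentiable ℝ (fun s => φ s 0) := fun t => (comp_hasDerivAt hφ 0 t).differentiableAt
  have hmul : ∀ t, (!![lam, 0; c, lam]).mulVec (φ t) =
      ![lam * φ t 0, lam * φ t 1 + c * φ t 0] := by
    intro t; funext i; fin_cases i <;>
      simp [Matrix.mulVec, dotProduct, Fin.sum_univ_two] <;> ring
  have h1 : ∀ t, |deriv (fun s => φ s 1) t - (lam * φ t 1 + c * φ t 0)| ≤ ε := by
    intro t
    rw [(comp_hasDerivAt hφ 1 t).deriv]
    have := comp_le (hbound t) 1
    simpa [hmul t] using this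
  have h2 : ∀ t, |deriv (fun s => φ s 0) t - lam * φ t 0| ≤ ε := by
    intro t
    rw [(comp_hasDerivAt hφ 0 t).deriv]
    have := comp_le (hbound t) 0
    simpa [hmul t] using this
  obtain ⟨a, y, ha, hy⟩ := core hlam _ _ hp hq h1 h2
  refine ⟨![y, a], fun t => ?_⟩
  have hK : (0:ℝ) ≤ (|lam| + |c|) / lam ^ 2 * ε := by positivity
  rw [pi_norm_le_iff_of_nonneg hK]
  intro i
  have hexp : (NormedSpace.exp (t • !![lam, 0; c, lam])).mulVec ![y, a] =
      ![Real.exp (lam*t) * y, t*c*Real.exp (lam*t) * y + Real.exp (lam*t) * a] := by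
    rw [expLower]
    funext j; fin_cases j <;> simp [Matrix.mulVec, dotProduct, Fin.sum_univ_two]
  rw [hexp]
  fin_cases i
  · simp only [Pi.sub_apply, Real.norm_eq_abs]
    calc |φ t 0 - ![Real.exp (lam*t) * y, t*c*Real.exp (lam*t) * y + Real.exp (lam*t) * a] 0|
        = |φ t 0 - Real.exp (lam * t) * y| := by congr 1
      _ ≤ (|lam| + |c|) / lam ^ 2 * ε := hy t
  · simp only [Pi.sub_apply, Real.norm_eq_abs]
    calc |φ t 1 - ![Real.exp (lam*t) * y, t*c*Real.exp (lam*t) * y + Real.exp (lam*t) * a] 1|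
        = |φ t 1 - Real.exp (lam * t) * (a + t * c * y)| := by
          congr 1
          simp only [Matrix.cons_val_one, Matrix.head_cons, Matrix.cons_val_zero]
          ring
      _ ≤ (|lam| + |c|) / lam ^ 2 * ε := ha t

lemma sign_exists (x : ℝ) : ∃ σ : ℝ, x * σ = |x| ∧ |σ| ≤ 1 ∧ (x ≠ 0 → |σ| = 1) := by
  rcases le_or_gt 0 x with h | h
  · exact ⟨1, by simp [abs_of_nonneg h], by norm_num, fun _ => by norm_num⟩
  · exact ⟨-1, by simp [abs_of_neg h], by norm_num, fun _ => by norm_num⟩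

lemma lowUpper (lam b K : ℝ) (hlam : lam ≠ 0) (hK : IsHUSWith !![lam, b; 0, lam] K) :
    K ≥ (|lam| + |b|) / lam ^ 2 := by
  obtain ⟨σ, hσ, hσ1, hσ2⟩ := sign_exists lam
  obtain ⟨τ, hτ, hτ1, hτ2⟩ := sign_exists b
  have hσe : |σ| = 1 := hσ2 hlam
  set w : Fin 2 → ℝ := ![(|lam| + |b|) / lam ^ 2, -τ / lam] with hw
  have hmul : (!![lam, b; 0, lam]).mulVec w = ![σ, -τ] := by
    funext i; fin_cases i <;>
      simp only [hw, Matrix.mulVec, dotProduct, Fin.sum_univ_two, Matrix.cons_val',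
        Matrix.cons_val_zero, Matrix.cons_val_one, Matrix.head_cons, Matrix.empty_val',
        Matrix.cons_val_fin_one, Matrix.head_fin_const, Matrix.of_apply, Fin.zero_eta, Fin.mk_one]
    · rw [← hσ, ← hτ]; field_simp; ring
    · field_simp; ring
  have hbound : ∀ t : ℝ, ‖deriv (fun _ : ℝ => w) t - (!![lam, b; 0, lam]).mulVec w‖ ≤ 1 := by
    intro t
    rw [deriv_const, hmul, pi_norm_le_iff_of_nonneg zero_le_one]
    intro i; fin_cases i
    · simp [hσe]
    · simpa using hτ1
  obtain ⟨x₀, hx₀⟩ := hK 1 one_pos (fun _ => w) (differentiable_const w)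
    (by intro t; simpa using hbound t)
  simp only [mul_one] at hx₀
  have habs : ∀ u v : ℝ, |u - v| ≤ K → |v| ≤ K + |u| := by
    intro u v h
    calc |v| = |u - (u - v)| := by congr 1; ring
      _ ≤ |u| + |u - v| := abs_sub u (u - v)
      _ ≤ |u| + K := by linarith
      _ = K + |u| := by ring
  have hx1 : x₀ 1 = 0 := by
    apply unbdd hlam (K := K + |w 1|) (y := x₀ 1)
    intro t
    have h := comp_le (hx₀ t) 1
    rw [Pi.sub_apply, expUpper] at h
    have hcomp : ((!![Real.exp (lam*t), t*b*Real.exp (lam*t); 0, Real.exp (lam*t)]).mulVec x₀) 1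
        = Real.exp (lam * t) * x₀ 1 := by
      simp [Matrix.mulVec, dotProduct, Fin.sum_univ_two]
    rw [hcomp] at h
    exact habs (w 1) _ h
  have hx0 : x₀ 0 = 0 := by
    apply unbdd hlam (K := K + |w 0|) (y := x₀ 0)
    intro t
    have h := comp_le (hx₀ t) 0
    rw [Pi.sub_apply, expUpper] at h
    have hcomp : ((!![Real.exp (lam*t), t*b*Real.exp (lam*t); 0, Real.exp (lam*t)]).mulVec x₀) 0
        = Real.exp (lam * t) * x₀ 0 := by
      simp [Matrix.mulVec, dotProduct, Fin.sum_univ_two, hx1]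
    rw [hcomp] at h
    exact habs (w 0) _ h
  have hfin := comp_le (hx₀ 0) 0
  have hzero : ((NormedSpace.exp ((0:ℝ) • !![lam, b; 0, lam])).mulVec x₀) 0 = 0 := by
    rw [expUpper]
    simp [Matrix.mulVec, dotProduct, Fin.sum_univ_two, hx0, hx1]
  rw [Pi.sub_apply, hzero, sub_zero] at hfin
  have : w 0 = (|lam| + |b|) / lam ^ 2 := rfl
  rw [this] at hfin
  calc (|lam| + |b|) / lam ^ 2 ≤ |(|lam| + |b|) / lam ^ 2| := le_abs_self _
    _ ≤ K := hfin

lemma lowLower (lam c K : ℝ) (hlam : lam ≠ 0) (hK : IsHUSWith !![lam, 0; c, lam] K) :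
    K ≥ (|lam| + |c|) / lam ^ 2 := by
  obtain ⟨σ, hσ, hσ1, hσ2⟩ := sign_exists lam
  obtain ⟨τ, hτ, hτ1, hτ2⟩ := sign_exists c
  have hσe : |σ| = 1 := hσ2 hlam
  set w : Fin 2 → ℝ := ![-τ / lam, (|lam| + |c|) / lam ^ 2] with hw
  have hmul : (!![lam, 0; c, lam]).mulVec w = ![-τ, σ] := by
    funext i; fin_cases i <;>
      simp only [hw, Matrix.mulVec, dotProduct, Fin.sum_univ_two, Matrix.cons_val',
        Matrix.cons_val_zero, Matrix.cons_val_one, Matrix.head_cons, Matrix.empty_val',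
        Matrix.cons_val_fin_one, Matrix.head_fin_const, Matrix.of_apply, Fin.zero_eta, Fin.mk_one]
    · field_simp; ring
    · rw [← hσ, ← hτ]; field_simp; ring
  have hbound : ∀ t : ℝ, ‖deriv (fun _ : ℝ => w) t - (!![lam, 0; c, lam]).mulVec w‖ ≤ 1 := by
    intro t
    rw [deriv_const, hmul, pi_norm_le_iff_of_nonneg zero_le_one]
    intro i; fin_cases i
    · simpa using hτ1
    · simp [hσe]
  obtain ⟨x₀, hx₀⟩ := hK 1 one_pos (fun _ => w) (differentiable_const w)
    (by intro t; simpa using hbound t)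
  simp only [mul_one] at hx₀
  have habs : ∀ u v : ℝ, |u - v| ≤ K → |v| ≤ K + |u| := by
    intro u v h
    calc |v| = |u - (u - v)| := by congr 1; ring
      _ ≤ |u| + |u - v| := abs_sub u (u - v)
      _ ≤ |u| + K := by linarith
      _ = K + |u| := by ring
  have hx0 : x₀ 0 = 0 := by
    apply unbdd hlam (K := K + |w 0|) (y := x₀ 0)
    intro t
    have h := comp_le (hx₀ t) 0
    rw [Pi.sub_apply, expLower] at h
    have hcomp : ((!![Real.exp (lam*t), 0; t*c*Real.exp (lam*t), Real.exp (lam*t)]).mulVec x₀) 0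
        = Real.exp (lam * t) * x₀ 0 := by
      simp [Matrix.mulVec, dotProduct, Fin.sum_univ_two]
    rw [hcomp] at h
    exact habs (w 0) _ h
  have hx1 : x₀ 1 = 0 := by
    apply unbdd hlam (K := K + |w 1|) (y := x₀ 1)
    intro t
    have h := comp_le (hx₀ t) 1
    rw [Pi.sub_apply, expLower] at h
    have hcomp : ((!![Real.exp (lam*t), 0; t*c*Real.exp (lam*t), Real.exp (lam*t)]).mulVec x₀) 1
        = Real.exp (lam * t) * x₀ 1 := by
      simp [Matrix.mulVec, dotProduct, Fin.sum_univ_two, hx0]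
    rw [hcomp] at h
    exact habs (w 1) _ h
  have hfin := comp_le (hx₀ 0) 1
  have hzero : ((NormedSpace.exp ((0:ℝ) • !![lam, 0; c, lam])).mulVec x₀) 1 = 0 := by
    rw [expLower]
    simp [Matrix.mulVec, dotProduct, Fin.sum_univ_two, hx0, hx1]
  rw [Pi.sub_apply, hzero, sub_zero] at hfin
  have hweq : w 1 = (|lam| + |c|) / lam ^ 2 := rfl
  rw [hweq] at hfin
  calc (|lam| + |c|) / lam ^ 2 ≤ |(|lam| + |c|) / lam ^ 2| := le_abs_self _
    _ ≤ K := hfin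

lemma normInvUpper (lam b : ℝ) (hlam : lam ≠ 0) :
    matNormInf (!![lam, b; 0, lam] : Matrix (Fin 2) (Fin 2) ℝ)⁻¹ = (|lam| + |b|) / lam ^ 2 := by
  have h2 : (0:ℝ) < lam ^ 2 := by positivity
  have hB : (!![lam, b; 0, lam] : Matrix (Fin 2) (Fin 2) ℝ)⁻¹
      = (lam ^ 2)⁻¹ • !![lam, -b; 0, lam] := by
    apply Matrix.inv_eq_right_inv
    ext i j
    fin_cases i <;> fin_cases j <;>
      simp [Matrix.mul_apply, Fin.sum_univ_two, Matrix.one_apply] <;>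
      field_simp <;> ring
  rw [hB]
  have hinv : |(lam ^ 2)⁻¹| = (lam ^ 2)⁻¹ := abs_of_pos (inv_pos.mpr h2)
  have e : ∀ i j, ((lam ^ 2)⁻¹ • (!![lam, -b; 0, lam] : Matrix (Fin 2) (Fin 2) ℝ)) i j
      = (lam ^ 2)⁻¹ * (!![lam, -b; 0, lam] : Matrix (Fin 2) (Fin 2) ℝ) i j := fun i j => rfl
  unfold matNormInf
  rw [e, e, e, e]
  norm_num [abs_mul, hinv]
  rw [max_eq_left (le_add_of_nonneg_right (by positivity))]
  ring

lemma normInvLower (lam c : ℝ) (hlam : lam ≠ 0) :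
    matNormInf (!![lam, 0; c, lam] : Matrix (Fin 2) (Fin 2) ℝ)⁻¹ = (|lam| + |c|) / lam ^ 2 := by
  have h2 : (0:ℝ) < lam ^ 2 := by positivity
  have hB : (!![lam, 0; c, lam] : Matrix (Fin 2) (Fin 2) ℝ)⁻¹
      = (lam ^ 2)⁻¹ • !![lam, 0; -c, lam] := by
    apply Matrix.inv_eq_right_inv
    ext i j
    fin_cases i <;> fin_cases j <;>
      simp [Matrix.mul_apply, Fin.sum_univ_two, Matrix.one_apply] <;>
      field_simp <;> ring
  rw [hB]
  have hinv : |(lam ^ 2)⁻¹| = (lam ^ 2)⁻¹ := abs_of_pos (inv_pos.mpr h2)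
  have e : ∀ i j, ((lam ^ 2)⁻¹ • (!![lam, 0; -c, lam] : Matrix (Fin 2) (Fin 2) ℝ)) i j
      = (lam ^ 2)⁻¹ * (!![lam, 0; -c, lam] : Matrix (Fin 2) (Fin 2) ℝ) i j := fun i j => rfl
  unfold matNormInf
  rw [e, e, e, e]
  norm_num [abs_mul, hinv]
  rw [max_eq_right (le_add_of_nonneg_left (by positivity))]
  ring


theorem stmt_15 (b c lam : ℝ) (hlam : lam ≠ 0) (hbc : b * c = 0)
    (A : Matrix (Fin 2) (Fin 2) ℝ) (hA : A = !![lam, b; c, lam]) :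
    matNormInf A⁻¹ = (|lam| + max |b| |c|) / lam ^ 2 ∧
    IsHUSWith A (matNormInf A⁻¹) ∧
    ∀ K : ℝ, IsHUSWith A K → K ≥ matNormInf A⁻¹ := by
  subst hA
  rcases mul_eq_zero.mp hbc with hb | hc
  · subst hb
    have hn := normInvLower lam c hlam
    have hmax : max |(0:ℝ)| |c| = |c| := by simp
    refine ⟨by rw [hn, hmax], ?_, ?_⟩
    · rw [hn]; exact husLower lam c hlam
    · intro K hK; rw [hn]; exact lowLower lam c K hlam hK
  · subst hc
    have hn := normInvUpper lam b hlam
    have hmax : max |b| |(0:ℝ)| = |b| := by simp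
    refine ⟨by rw [hn, hmax], ?_, ?_⟩
    · rw [hn]; exact husUpper lam b hlam
    · intro K hK; rw [hn]; exact lowUpper lam b K hlam hK
end

section
/- Let λ₁, λ₂ ∈ ℝ (or complex conjugates) and suppose the 2×2 system x' = Ax with A = [[0,1],[−λ₁λ₂, λ₁+λ₂]] is Hyers-Ulam stable on ℝ with constant K. Then the scalar equation x''(t) − (λ₁+λ₂)x'(t) + λ₁λ₂x(t) = 0 is Hyers-Ulam stable on ℝ with the same constant K: for every ε > 0 and twice-differentiable φ: ℝ → ℝ with |φ''(t) − (λ₁+λ₂)φ'(t) + λ₁λ₂φ(t)| ≤ ε on ℝ, there exists a solution x of the scalar equation with |φ(t) − x(t)| ≤ Kε on ℝ. -/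
open Matrix

attribute [local instance] Matrix.linftyOpNormedRing Matrix.linftyOpNormedAlgebra
  Matrix.linftyOpNormedAddCommGroup

theorem stmt_17 (lam1 lam2 : ℂ)
    (hconj : (lam1.im = 0 ∧ lam2.im = 0) ∨ lam2 = starRingEnd ℂ lam1)
    (s q : ℝ) (hs : (s : ℂ) = lam1 + lam2) (hq : (q : ℂ) = lam1 * lam2)
    (A : Matrix (Fin 2) (Fin 2) ℝ) (hA : A = !![0, 1; -q, s])
    (K : ℝ)
    (hK : ∀ ε > (0:ℝ), ∀ Φ : ℝ → (Fin 2 → ℝ), Differentiable ℝ Φ →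
      (∀ t : ℝ, ‖deriv Φ t - A.mulVec (Φ t)‖ ≤ ε) →
      ∃ X₀ : Fin 2 → ℝ, ∀ t : ℝ,
        ‖Φ t - (NormedSpace.exp (t • A)).mulVec X₀‖ ≤ K * ε) :
    ∀ ε > (0:ℝ), ∀ φ : ℝ → ℝ, Differentiable ℝ φ → Differentiable ℝ (deriv φ) →
      (∀ t : ℝ, |deriv (deriv φ) t - s * deriv φ t + q * φ t| ≤ ε) →
      ∃ x : ℝ → ℝ, Differentiable ℝ x ∧ Differentiable ℝ (deriv x) ∧
        (∀ t : ℝ, deriv (deriv x) t - s * deriv x t + q * x t = 0) ∧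
        ∀ t : ℝ, |φ t - x t| ≤ K * ε := by
  intro ε hε φ hφ hφ' hbound
  set Φ : ℝ → (Fin 2 → ℝ) := fun t => ![φ t, deriv φ t] with hΦdef
  have hΦd : ∀ t, HasDerivAt Φ ![deriv φ t, deriv (deriv φ) t] t := by
    intro t
    rw [hasDerivAt_pi]
    intro i
    fin_cases i
    · simpa [hΦdef] using (hφ t).hasDerivAt
    · simpa [hΦdef] using (hφ' t).hasDerivAt
  have hΦdiff : Differentiable ℝ Φ := fun t => (hΦd t).differentiableAt
  have hmulVec : ∀ v : Fin 2 → ℝ, A.mulVec v = ![v 1, -q * v 0 + s * v 1] := by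
    intro v
    subst hA
    funext i
    fin_cases i <;>
      simp [Matrix.mulVec, dotProduct, Fin.sum_univ_two, Matrix.vecHead, Matrix.vecTail]
  have hΦbound : ∀ t : ℝ, ‖deriv Φ t - A.mulVec (Φ t)‖ ≤ ε := by
    intro t
    rw [(hΦd t).deriv, hmulVec]
    have hv : (![deriv φ t, deriv (deriv φ) t] -
        ![Φ t 1, -q * Φ t 0 + s * Φ t 1]) =
        ![0, deriv (deriv φ) t - s * deriv φ t + q * φ t] := by
      funext i
      fin_cases i <;> simp [hΦdef] <;> ring
    rw [hv, pi_norm_le_iff_of_nonneg hε.le]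
    intro i
    fin_cases i
    · simpa using hε.le
    · simpa using hbound t
  obtain ⟨X₀, hX₀⟩ := hK ε hε Φ hΦdiff hΦbound
  set X : ℝ → (Fin 2 → ℝ) := fun t => (NormedSpace.exp (t • A)).mulVec X₀ with hXdef
  -- the evaluation map B ↦ B.mulVec X₀ as a continuous linear map
  let L : Matrix (Fin 2) (Fin 2) ℝ →L[ℝ] (Fin 2 → ℝ) :=
    LinearMap.toContinuousLinearMap
      { toFun := fun B => B.mulVec X₀
        map_add' := fun B C => Matrix.add_mulVec B C X₀
        map_smul' := fun c B => Matrix.smul_mulVec c B X₀ }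
  have hL : ∀ B : Matrix (Fin 2) (Fin 2) ℝ, L B = B.mulVec X₀ := fun B => rfl
  have hXd : ∀ t, HasDerivAt X (A.mulVec (X t)) t := by
    intro t
    have h1 : HasDerivAt (fun u : ℝ => NormedSpace.exp (u • A))
        (A * NormedSpace.exp (t • A)) t := hasDerivAt_exp_smul_const' A t
    have h2 : HasDerivAt (fun u : ℝ => L (NormedSpace.exp (u • A)))
        (L (A * NormedSpace.exp (t • A))) t :=
      (L.hasFDerivAt.comp_hasDerivAt t h1 :)
    have h3 : L (A * NormedSpace.exp (t • A)) = A.mulVec (X t) := by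
      rw [hL, hXdef, ← Matrix.mulVec_mulVec]
    rw [h3] at h2
    exact h2
  -- component derivatives
  have hXd0 : ∀ t, HasDerivAt (fun u => X u 0) (X t 1) t := by
    intro t
    have := (hasDerivAt_pi.mp (hXd t)) 0
    rwa [hmulVec] at this
  have hXd1 : ∀ t, HasDerivAt (fun u => X u 1) (-q * X t 0 + s * X t 1) t := by
    intro t
    have := (hasDerivAt_pi.mp (hXd t)) 1
    rwa [hmulVec] at this
  refine ⟨fun t => X t 0, fun t => (hXd0 t).differentiableAt, ?_, ?_, ?_⟩
  · have hd : deriv (fun u => X u 0) = fun u => X u 1 := funext fun t => (hXd0 t).deriv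
    rw [hd]
    exact fun t => (hXd1 t).differentiableAt
  · intro t
    have hd : deriv (fun u => X u 0) = fun u => X u 1 := funext fun t => (hXd0 t).deriv
    rw [hd, (hXd1 t).deriv]
    ring
  · intro t
    have h := hX₀ t
    have h0 : |(Φ t - X t) 0| ≤ ‖Φ t - X t‖ := by
      simpa [Real.norm_eq_abs] using norm_le_pi_norm (Φ t - X t) 0
    have hΦ0 : Φ t 0 = φ t := rfl
    calc |φ t - X t 0| = |(Φ t - X t) 0| := by rw [Pi.sub_apply, hΦ0]
      _ ≤ ‖Φ t - X t‖ := h0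
      _ ≤ K * ε := h
end

section
/- Let λ ≥ (e−1)/e + √(1−2e+2e²)/e and A = [[0, 1],[−λ², 2λ]] (so A has repeated eigenvalue λ > 0). Then the second-order equation x'' − 2λx' + λ²x = 0 is Hyers-Ulam stable on ℝ with constant K = (λ + 2e^{−1})/λ², while for 0 < λ < (e−1)/e + √(1−2e+2e²)/e it is Hyers-Ulam stable with constant K = (2λ+1)/λ². -/
open Real

/-- Hyers-Ulam stability of `x'' − 2λx' + λ²x = 0` on `ℝ` with constant `K`. -/
def ScalarHUSWith (lam K : ℝ) : Prop :=
  ∀ ε > (0:ℝ), ∀ φ : ℝ → ℝ, Differentiable ℝ φ → Differentiable ℝ (deriv φ) →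
    (∀ t : ℝ, |deriv (deriv φ) t - 2 * lam * deriv φ t + lam ^ 2 * φ t| ≤ ε) →
    ∃ x : ℝ → ℝ, Differentiable ℝ x ∧ Differentiable ℝ (deriv x) ∧
      (∀ t : ℝ, deriv (deriv x) t - 2 * lam * deriv x t + lam ^ 2 * x t = 0) ∧
      ∀ t : ℝ, |φ t - x t| ≤ K * ε

/-- Key lemma: if `|k'| ≤ C e^{-λt}` everywhere, then `k` is within `(C/λ)e^{-λt}` of a
constant. -/
lemma key_lemma (lam C : ℝ) (hlam : 0 < lam) (hC : 0 ≤ C)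
    (k k' : ℝ → ℝ) (hk : ∀ t, HasDerivAt k (k' t) t)
    (hb : ∀ t, |k' t| ≤ C * Real.exp (-lam * t)) :
    ∃ d : ℝ, ∀ t, |k t - d| ≤ C / lam * Real.exp (-lam * t) := by
  set q : ℝ → ℝ := fun t => -(C / lam) * Real.exp (-lam * t) with hq
  have hq' : ∀ t, HasDerivAt q (C * Real.exp (-lam * t)) t := by
    intro t
    have h1 : HasDerivAt (fun t : ℝ => -lam * t) (-lam) t := by
      simpa using (hasDerivAt_id t).const_mul (-lam)
    have h2 := h1.exp
    have h3 := h2.const_mul (-(C / lam))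
    refine h3.congr_deriv ?_
    field_simp
  have hqneg : ∀ t, q t ≤ 0 := by
    intro t
    have h : 0 ≤ C / lam * Real.exp (-lam * t) :=
      mul_nonneg (div_nonneg hC hlam.le) (Real.exp_pos _).le
    simp only [hq, neg_mul] at h ⊢
    linarith
  -- m = k + q is monotone, n = k - q is antitone
  have hm : Monotone (fun t => k t + q t) := by
    apply monotone_of_deriv_nonneg
    · exact fun t => ((hk t).add (hq' t)).differentiableAt
    · intro t
      rw [HasDerivAt.deriv (f := fun t => k t + q t) ((hk t).add (hq' t))]
      have := (abs_le.mp (hb t)).1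
      linarith
  have hn : Antitone (fun t => k t - q t) := by
    apply antitone_of_deriv_nonpos
    · exact fun t => ((hk t).sub (hq' t)).differentiableAt
    · intro t
      rw [HasDerivAt.deriv (f := fun t => k t - q t) ((hk t).sub (hq' t))]
      have := (abs_le.mp (hb t)).2
      linarith
  -- m is bounded above
  have hbdd : BddAbove (Set.range fun t => k t + q t) := by
    refine ⟨k 0 - q 0, ?_⟩
    rintro y ⟨t, rfl⟩
    rcases le_total t 0 with h | h
    · have := hm h
      have := hqneg 0
      simp only at *
      linarith
    · have := hn h
      have := hqneg t
      simp only at *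
      linarith
  set d : ℝ := ⨆ t, (k t + q t) with hd
  have hmt : Filter.Tendsto (fun t => k t + q t) Filter.atTop (nhds d) :=
    tendsto_atTop_ciSup hm hbdd
  refine ⟨d, fun t => ?_⟩
  have hub : k t + q t ≤ d := le_ciSup hbdd t
  -- lower bound on d: for s ≥ t, k s - q s ≤ k t - q t, and k s + q s → d, q s → 0
  have hqt : Filter.Tendsto q Filter.atTop (nhds 0) := by
    have : Filter.Tendsto (fun t : ℝ => Real.exp (-(lam * t))) Filter.atTop (nhds 0) := by
      have h0 : Filter.Tendsto (fun t : ℝ => lam * t) Filter.atTop Filter.atTop := by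
        exact Filter.Tendsto.const_mul_atTop hlam Filter.tendsto_id
      have h1 : Filter.Tendsto (fun t : ℝ => -(lam * t)) Filter.atTop Filter.atBot := by
        exact Filter.tendsto_neg_atTop_atBot.comp h0
      exact Real.tendsto_exp_atBot.comp h1
    have h3 := this.const_mul (-(C / lam))
    have h4 : q = fun t : ℝ => -(C / lam) * Real.exp (-(lam * t)) := by
      funext t; rw [hq]; ring_nf
    rw [h4]; simpa using h3
  have hkt : Filter.Tendsto k Filter.atTop (nhds d) := by
    have := hmt.sub hqt
    simpa using this
  have hlb : d ≤ k t - q t := by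
    refine le_of_tendsto hkt ?_
    filter_upwards [Filter.eventually_ge_atTop t] with s hs
    have h1 := hn hs
    have h2 := hqneg s
    simp only at h1
    linarith
  have : -q t = C / lam * Real.exp (-lam * t) := by simp [hq]
  rw [abs_le]
  constructor <;> linarith [hub, hlb, this]

lemma hus_of_le (lam K : ℝ) (hlam : 0 < lam) (hK : 1 / lam ^ 2 ≤ K) :
    ScalarHUSWith lam K := by
  intro ε hε φ hφ hφ' hb
  -- stage 1
  set u : ℝ → ℝ := fun t => Real.exp (-lam * t) * (deriv φ t - lam * φ t) with hu
  have hexp : ∀ t : ℝ, HasDerivAt (fun t : ℝ => Real.exp (-lam * t))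
      (-lam * Real.exp (-lam * t)) t := by
    intro t
    have h1 : HasDerivAt (fun t : ℝ => -lam * t) (-lam) t := by
      simpa using (hasDerivAt_id t).const_mul (-lam)
    simpa [mul_comm] using h1.exp
  have hu' : ∀ t, HasDerivAt u
      (Real.exp (-lam * t) * (deriv (deriv φ) t - 2 * lam * deriv φ t + lam ^ 2 * φ t)) t := by
    intro t
    have h1 : HasDerivAt (fun t => deriv φ t - lam * φ t)
        (deriv (deriv φ) t - lam * deriv φ t) t :=
      ((hφ' t).hasDerivAt).sub (((hφ t).hasDerivAt).const_mul lam)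
    have := (hexp t).mul h1
    refine this.congr_deriv ?_
    ring
  have hub : ∀ t, |Real.exp (-lam * t) *
      (deriv (deriv φ) t - 2 * lam * deriv φ t + lam ^ 2 * φ t)| ≤ ε * Real.exp (-lam * t) := by
    intro t
    rw [abs_mul, abs_of_pos (Real.exp_pos _), mul_comm]
    exact mul_le_mul_of_nonneg_right (hb t) (Real.exp_pos _).le
  obtain ⟨c, hc⟩ := key_lemma lam ε hlam hε.le u _ hu' hub
  -- stage 2
  set w : ℝ → ℝ := fun t => Real.exp (-lam * t) * φ t - c * t with hw
  have hw' : ∀ t, HasDerivAt w (u t - c) t := by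
    intro t
    have h1 := (hexp t).mul ((hφ t).hasDerivAt)
    have h2 : HasDerivAt (fun t : ℝ => c * t) c t := by
      simpa using (hasDerivAt_id t).const_mul c
    have := h1.sub h2
    refine this.congr_deriv ?_
    simp only [hu]
    ring
  have hwb : ∀ t, |u t - c| ≤ (ε / lam) * Real.exp (-lam * t) := fun t => hc t
  obtain ⟨d, hdb⟩ := key_lemma lam (ε / lam) hlam (div_nonneg hε.le hlam.le) w _ hw' hwb
  -- the solution
  set x : ℝ → ℝ := fun t => (c * t + d) * Real.exp (lam * t) with hx
  have hexp2 : ∀ t : ℝ, HasDerivAt (fun t : ℝ => Real.exp (lam * t))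
      (lam * Real.exp (lam * t)) t := by
    intro t
    have h1 : HasDerivAt (fun t : ℝ => lam * t) lam t := by
      simpa using (hasDerivAt_id t).const_mul lam
    simpa [mul_comm] using h1.exp
  have hx1 : ∀ t, HasDerivAt x ((lam * (c * t + d) + c) * Real.exp (lam * t)) t := by
    intro t
    have h1 : HasDerivAt (fun t : ℝ => c * t + d) c t := by
      simpa using ((hasDerivAt_id t).const_mul c).add_const d
    have := h1.mul (hexp2 t)
    refine this.congr_deriv ?_
    ring
  have hxd : deriv x = fun t => (lam * (c * t + d) + c) * Real.exp (lam * t) :=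
    funext fun t => (hx1 t).deriv
  have hx2 : ∀ t, HasDerivAt (deriv x)
      ((lam * (lam * (c * t + d) + c) + lam * c) * Real.exp (lam * t)) t := by
    intro t
    rw [hxd]
    have h1 : HasDerivAt (fun t : ℝ => lam * (c * t + d) + c) (lam * c) t := by
      have := (((hasDerivAt_id t).const_mul c).add_const d).const_mul lam
      simpa using this.add_const c
    have := h1.mul (hexp2 t)
    refine this.congr_deriv ?_
    ring
  refine ⟨x, fun t => (hx1 t).differentiableAt, fun t => (hx2 t).differentiableAt, ?_, ?_⟩
  · intro t
    rw [(hx2 t).deriv, hxd]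
    simp only [hx]
    ring
  · intro t
    have h1 := hdb t
    have hee : Real.exp (lam * t) * Real.exp (-lam * t) = 1 := by
      rw [← Real.exp_add]; ring_nf; exact Real.exp_zero
    have h2 : φ t - (c * t + d) * Real.exp (lam * t) = Real.exp (lam * t) * (w t - d) := by
      simp only [hw]
      linear_combination (-(φ t)) * hee
    rw [h2, abs_mul, abs_of_pos (Real.exp_pos _)]
    calc Real.exp (lam * t) * |w t - d| ≤ Real.exp (lam * t) * (ε / lam / lam * Real.exp (-lam * t)) := by
          exact mul_le_mul_of_nonneg_left h1 (Real.exp_pos _).le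
      _ = ε / lam ^ 2 := by
          rw [show Real.exp (lam * t) * (ε / lam / lam * Real.exp (-lam * t)) =
            ε / lam / lam * (Real.exp (lam * t) * Real.exp (-lam * t)) by ring, hee,
            mul_one, div_div, ← sq]
      _ ≤ K * ε := by
          rw [div_eq_mul_one_div, mul_comm]
          exact mul_le_mul_of_nonneg_right hK hε.le

theorem stmt_18 (lam : ℝ) (hlam : 0 < lam) :
    (lam ≥ (Real.exp 1 - 1) / Real.exp 1 +
        Real.sqrt (1 - 2 * Real.exp 1 + 2 * (Real.exp 1) ^ 2) / Real.exp 1 →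
      ScalarHUSWith lam ((lam + 2 * (Real.exp 1)⁻¹) / lam ^ 2)) ∧
    (lam < (Real.exp 1 - 1) / Real.exp 1 +
        Real.sqrt (1 - 2 * Real.exp 1 + 2 * (Real.exp 1) ^ 2) / Real.exp 1 →
      ScalarHUSWith lam ((2 * lam + 1) / lam ^ 2)) := by
  constructor
  · intro h
    apply hus_of_le lam _ hlam
    have he : (1:ℝ) < Real.exp 1 := by
      have := Real.exp_one_gt_d9; linarith
    have hs : 0 ≤ Real.sqrt (1 - 2 * Real.exp 1 + 2 * (Real.exp 1) ^ 2) / Real.exp 1 :=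
      div_nonneg (Real.sqrt_nonneg _) (Real.exp_pos _).le
    have h1 : 1 - (Real.exp 1)⁻¹ ≤ lam := by
      have : (Real.exp 1 - 1) / Real.exp 1 = 1 - (Real.exp 1)⁻¹ := by
        field_simp
      linarith
    have h2 : 1 ≤ lam + 2 * (Real.exp 1)⁻¹ := by
      have : 0 < (Real.exp 1)⁻¹ := inv_pos.mpr (Real.exp_pos _)
      linarith
    rw [div_le_div_iff₀ (by positivity) (by positivity)]
    nlinarith [sq_nonneg lam]
  · intro h
    apply hus_of_le lam _ hlam
    rw [div_le_div_iff₀ (by positivity) (by positivity)]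
    nlinarith [sq_nonneg lam]
end
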